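/- (Flagged Jacobi–Trudi identity, even orthogonal case.) Let n ≥ 1, let R be a commutative ring, let x_1, …, x_n be invertible elements of R with x̄_i := x_i^{−1}, let a = (a_1, a_2, …) be a sequence in R, and let λ = (λ_1 ≥ … ≥ λ_n ≥ 0) be a partition with at most n parts. Then det_{1≤i,j≤n} ( (x_i|a)^{λ_j+n−j} + (x̄_i|a)^{λ_j+n−j} ) = ε · ∏_{1≤i<j≤n}(x_i + x̄_i − x_j − x̄_j) · det_{1≤i,j≤n} ( h^{eo}_{λ_j−j+i}(x^{(i)}, x̄^{(i)}|a) ), where ε = 2 if λ_n = 0 and ε = 1 if λ_n > 0, and x^{(i)} := (x_i, …, x_n), x̄^{(i)} := (x̄_i, …, x̄_n). -/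

import Mathlib

open Finset

noncomputable def geom {R : Type*} [CommRing R] (x : R) : PowerSeries R :=
  PowerSeries.mk fun k => x ^ k

noncomputable def lin {R : Type*} [CommRing R] (a : R) : PowerSeries R :=
  1 + PowerSeries.C (R := R) a * PowerSeries.X

noncomputable def facpow {R : Type*} [CommRing R] (x : R) (a : ℕ → R) (m : ℕ) : R :=
  ∏ j ∈ Finset.range m, (x + a (j + 1))

noncomputable def hgl {R : Type*} [CommRing R] {n : ℕ} (x : Fin n → R) (a : ℕ → R) (m : ℤ) : R :=
  if 0 ≤ m then
    PowerSeries.coeff (R := R) m.toNat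
      ((∏ i, geom (x i)) * ∏ j ∈ Finset.range (n + m.toNat - 1), lin (a (j + 1)))
  else 0

noncomputable def hsp {R : Type*} [CommRing R] {n : ℕ} (x : Fin n → Rˣ) (a : ℕ → R) (m : ℤ) : R :=
  if 0 ≤ m then
    PowerSeries.coeff (R := R) m.toNat
      ((∏ i, geom ((x i : R)) * geom (((x i)⁻¹ : Rˣ) : R)) *
        ∏ j ∈ Finset.range (n + m.toNat - 1), lin (a (j + 1)))
  else 0

noncomputable def hoo {R : Type*} [CommRing R] {n : ℕ} (x : Fin n → Rˣ) (a : ℕ → R) (m : ℤ) : R :=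
  if 0 ≤ m then
    PowerSeries.coeff (R := R) m.toNat
      ((1 + PowerSeries.X) * (∏ i, geom ((x i : R)) * geom (((x i)⁻¹ : Rˣ) : R)) *
        ∏ j ∈ Finset.range (n + m.toNat - 1), lin (a (j + 1)))
  else 0

noncomputable def heo {R : Type*} [CommRing R] {n : ℕ} (x : Fin n → Rˣ) (a : ℕ → R) (m : ℤ) : R :=
  if 0 ≤ m then
    if h : n = 1 then
      (PowerSeries.coeff (R := R) m.toNat
        ((geom ((x ⟨0, by omega⟩ : Rˣ) : R) + geom (((x ⟨0, by omega⟩)⁻¹ : Rˣ) : R)) *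
          ∏ j ∈ Finset.range m.toNat, lin (a (j + 1))))
        - (if m = 0 then 1 else 0)
    else
      PowerSeries.coeff (R := R) m.toNat
        ((1 - PowerSeries.X ^ 2) * (∏ i, geom ((x i : R)) * geom (((x i)⁻¹ : Rˣ) : R)) *
          ∏ j ∈ Finset.range (n + m.toNat - 1), lin (a (j + 1)))
  else 0

noncomputable def heod {R : Type*} [CommRing R] {n : ℕ} (x : Fin n → Rˣ) (a : ℕ → R) (m : ℤ) : R :=
  if 0 < m then
    if h : 0 < n then
      PowerSeries.coeff (R := R) m.toNat
        ((geom ((x ⟨0, h⟩ : Rˣ) : R) - geom (((x ⟨0, h⟩)⁻¹ : Rˣ) : R)) *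
          (∏ i ∈ Finset.univ.filter (fun i : Fin n => i ≠ ⟨0, h⟩),
            geom ((x i : R)) * geom (((x i)⁻¹ : Rˣ) : R)) *
          ∏ j ∈ Finset.range (n + m.toNat - 1), lin (a (j + 1)))
    else 0
  else 0

section Aux
variable {R : Type*} [CommRing R]
open PowerSeries

lemma FJT_geom_shift (x : R) : geom x = 1 + C x * (X * geom x) := by
  ext k
  cases k with
  | zero => simp [geom, coeff_mk]
  | succ k =>
      simp only [map_add, coeff_one, Nat.succ_ne_zero, if_false, coeff_C_mul,
        coeff_succ_X_mul, geom, coeff_mk, zero_add, pow_succ]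
      ring

lemma FJT_one_sub_mul_geom (x : R) : (1 - C x * X) * geom x = 1 := by
  linear_combination FJT_geom_shift x

lemma FJT_CC_one {x y : R} (h : x * y = 1) : (C x) * (C y) = 1 := by
  rw [← map_mul, h, map_one]

lemma FJT_geom_add_geom {x y : R} (h : x * y = 1) :
    geom x + geom y = 1 + (1 - X^2) * (geom x * geom y) := by
  have e1 := FJT_one_sub_mul_geom x
  have e2 := FJT_one_sub_mul_geom y
  have e3 := FJT_CC_one h
  have key : (geom x + geom y) * ((1 - C x * X) * (1 - C y * X)) =
      (1 + (1 - X^2) * (geom x * geom y)) * ((1 - C x * X) * (1 - C y * X)) := by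
    linear_combination ((1 - C y * X) - (1 - X^2) * ((1 - C y * X) * geom y)) * e1 +
      ((1 - C x * X) - (1 - X^2)) * e2 - X^2 * e3
  have hu : ((1 - C x * X) * (1 - C y * X)) * (geom x * geom y) = 1 := by
    calc ((1 - C x * X) * (1 - C y * X)) * (geom x * geom y)
        = ((1 - C x * X) * geom x) * ((1 - C y * X) * geom y) := by ring
      _ = 1 := by rw [e1, e2, mul_one]
  calc geom x + geom y
      = (geom x + geom y) * (((1 - C x * X) * (1 - C y * X)) * (geom x * geom y)) := by
        rw [hu, mul_one]
    _ = ((geom x + geom y) * ((1 - C x * X) * (1 - C y * X))) * (geom x * geom y) := by ring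
    _ = ((1 + (1 - X^2) * (geom x * geom y)) * ((1 - C x * X) * (1 - C y * X))) *
          (geom x * geom y) := by rw [key]
    _ = (1 + (1 - X^2) * (geom x * geom y)) *
          (((1 - C x * X) * (1 - C y * X)) * (geom x * geom y)) := by ring
    _ = 1 + (1 - X^2) * (geom x * geom y) := by rw [hu, mul_one]

noncomputable def FJT_useries (c : R) : PowerSeries R := 1 - C c * X + X^2

lemma FJT_useries_mul_geom {x y : R} (h : x * y = 1) :
    FJT_useries (x + y) * (geom x * geom y) = 1 := by
  have e1 := FJT_one_sub_mul_geom x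
  have e2 := FJT_one_sub_mul_geom y
  have e3 := FJT_CC_one h
  simp only [FJT_useries, map_add]
  linear_combination ((1 - C y * X) * geom y) * e1 + e2 - X^2 * (geom x * geom y) * e3

lemma FJT_linprod_coeff_zero (b : ℕ → R) (m : ℕ) :
    ∀ k, m < k → coeff k (∏ j ∈ Finset.range m, lin (b j)) = 0 := by
  induction m with
  | zero => intro k hk; simp [coeff_one, hk.ne']
  | succ m ih =>
      intro k hk
      obtain ⟨k', rfl⟩ : ∃ k', k = k' + 1 := ⟨k - 1, by omega⟩
      rw [Finset.prod_range_succ, lin, mul_add, mul_one, map_add, ih _ (by omega), zero_add,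
        show (∏ j ∈ Finset.range m, lin (b j)) * (C (b m) * X)
          = ((∏ j ∈ Finset.range m, lin (b j)) * C (b m)) * X by ring,
        coeff_succ_mul_X, coeff_mul_C, ih _ (by omega), zero_mul]

lemma FJT_coeff_geom_mul_linprod (x : R) (b : ℕ → R) (m : ℕ) :
    coeff m (geom x * ∏ j ∈ Finset.range m, lin (b j)) = ∏ j ∈ Finset.range m, (x + b j) := by
  induction m with
  | zero => simp [geom, coeff_mk]
  | succ m ih =>
      have hsplit : geom x * (∏ j ∈ Finset.range m, lin (b j)) =
          (∏ j ∈ Finset.range m, lin (b j)) +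
            C x * (X * (geom x * ∏ j ∈ Finset.range m, lin (b j))) := by
        conv_lhs => rw [FJT_geom_shift x]
        ring
      rw [Finset.prod_range_succ, lin, show geom x * ((∏ j ∈ Finset.range m, lin (b j)) *
            (1 + C (b m) * X)) = (geom x * ∏ j ∈ Finset.range m, lin (b j)) +
            ((geom x * ∏ j ∈ Finset.range m, lin (b j)) * C (b m)) * X by ring,
        map_add, coeff_succ_mul_X, coeff_mul_C, ih, hsplit, map_add,
        FJT_linprod_coeff_zero b m _ (by omega), zero_add, coeff_C_mul, coeff_succ_X_mul, ih,
        Finset.prod_range_succ]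
      ring

end Aux

section Newton
variable {R : Type*} [CommRing R]
open PowerSeries

lemma FJT_newton (q : ℕ → R) :
    ∀ n i, i < n →
      ∏ l ∈ Finset.Ico (i+1) n, FJT_useries (q l) =
        ∑ k ∈ Finset.Ico i n, C (∏ l ∈ Finset.Ico (k+1) n, (q i - q l)) *
          (X ^ (n - 1 - k) * ∏ l ∈ Finset.Ico i k, FJT_useries (q l)) := by
  intro n
  induction n with
  | zero => intro i h; omega
  | succ n ih =>
      intro i hi
      rcases Nat.lt_or_ge i n with hin | hin
      · -- step case : i < n
        have h1 : i + 1 ≤ n := hin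
        have hLHS : ∏ l ∈ Finset.Ico (i+1) (n+1), FJT_useries (q l) =
            (∑ k ∈ Finset.Ico i n, C (∏ l ∈ Finset.Ico (k+1) n, (q i - q l)) *
              (X ^ (n - 1 - k) * ∏ l ∈ Finset.Ico i k, FJT_useries (q l))) *
              FJT_useries (q n) := by
          rw [Finset.prod_Ico_succ_top h1, ih i hin]
        rw [hLHS, Finset.sum_mul]
        -- split each term
        have hterm : ∀ k ∈ Finset.Ico i n,
            (C (∏ l ∈ Finset.Ico (k+1) n, (q i - q l)) *
              (X ^ (n - 1 - k) * ∏ l ∈ Finset.Ico i k, FJT_useries (q l))) * FJT_useries (q n) =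
            (C (∏ l ∈ Finset.Ico (k+1) n, (q i - q l)) *
              (X ^ (n - 1 - k) * ∏ l ∈ Finset.Ico i (k+1), FJT_useries (q l))) +
            (C ((∏ l ∈ Finset.Ico (k+1) n, (q i - q l)) * (q k - q n)) *
              (X ^ (n - k) * ∏ l ∈ Finset.Ico i k, FJT_useries (q l))) := by
          intro k hk
          rw [Finset.mem_Ico] at hk
          have hu : FJT_useries (q n) = FJT_useries (q k) + C (q k - q n) * X := by
            simp only [FJT_useries, map_sub]
            ring
          have hPi : ∏ l ∈ Finset.Ico i (k+1), FJT_useries (q l) =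
              (∏ l ∈ Finset.Ico i k, FJT_useries (q l)) * FJT_useries (q k) :=
            Finset.prod_Ico_succ_top hk.1 _
          have hX : (X : PowerSeries R) ^ (n - k) = X ^ (n - 1 - k) * X := by
            rw [← pow_succ]
            congr 1
            omega
          rw [hu, hPi, hX, map_mul]
          ring
        rw [Finset.sum_congr rfl hterm, Finset.sum_add_distrib]
        -- reindex first sum
        have hreindex : (∑ k ∈ Finset.Ico i n,
              C (∏ l ∈ Finset.Ico (k+1) n, (q i - q l)) *
                (X ^ (n - 1 - k) * ∏ l ∈ Finset.Ico i (k+1), FJT_useries (q l))) =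
            ∑ k ∈ Finset.Ico (i+1) (n+1),
              C (∏ l ∈ Finset.Ico k n, (q i - q l)) *
                (X ^ (n - k) * ∏ l ∈ Finset.Ico i k, FJT_useries (q l)) := by
          rw [← Finset.map_add_right_Ico _ _ 1, Finset.sum_map]
          refine Finset.sum_congr rfl fun k hk => ?_
          rw [Finset.mem_Ico] at hk
          simp only [addRightEmbedding_apply]
          rw [show n - 1 - k = n - (k+1) from by omega]
        rw [hreindex]
        -- peel top of first sum
        rw [Finset.sum_Ico_succ_top (by omega : i + 1 ≤ n)]
        -- peel bottom of second sum
        rw [Finset.sum_eq_sum_Ico_succ_bot hin]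
        -- RHS : peel bottom then top
        rw [Finset.sum_eq_sum_Ico_succ_bot (by omega : i < n + 1),
          Finset.sum_Ico_succ_top (by omega : i + 1 ≤ n)]
        have hbot : C ((∏ l ∈ Finset.Ico (i+1) n, (q i - q l)) * (q i - q n)) *
              (X ^ (n - i) * ∏ l ∈ Finset.Ico i i, FJT_useries (q l)) =
            C (∏ l ∈ Finset.Ico (i+1) (n+1), (q i - q l)) *
              (X ^ (n + 1 - 1 - i) * ∏ l ∈ Finset.Ico i i, FJT_useries (q l)) := by
          rw [Finset.prod_Ico_succ_top (by omega : i + 1 ≤ n),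
            show n + 1 - 1 - i = n - i from by omega]
        have htop : C (∏ l ∈ Finset.Ico n n, (q i - q l)) *
              (X ^ (n - n) * ∏ l ∈ Finset.Ico i n, FJT_useries (q l)) =
            C (∏ l ∈ Finset.Ico (n+1) (n+1), (q i - q l)) *
              (X ^ (n + 1 - 1 - n) * ∏ l ∈ Finset.Ico i n, FJT_useries (q l)) := by
          simp
        have hmid : ∀ k ∈ Finset.Ico (i+1) n,
            C (∏ l ∈ Finset.Ico k n, (q i - q l)) *
              (X ^ (n - k) * ∏ l ∈ Finset.Ico i k, FJT_useries (q l)) +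
            C ((∏ l ∈ Finset.Ico (k+1) n, (q i - q l)) * (q k - q n)) *
              (X ^ (n - k) * ∏ l ∈ Finset.Ico i k, FJT_useries (q l)) =
            C (∏ l ∈ Finset.Ico (k+1) (n+1), (q i - q l)) *
              (X ^ (n + 1 - 1 - k) * ∏ l ∈ Finset.Ico i k, FJT_useries (q l)) := by
          intro k hk
          rw [Finset.mem_Ico] at hk
          rw [← add_mul, ← map_add]
          have : (∏ l ∈ Finset.Ico k n, (q i - q l)) +
              (∏ l ∈ Finset.Ico (k+1) n, (q i - q l)) * (q k - q n) =
              ∏ l ∈ Finset.Ico (k+1) (n+1), (q i - q l) := by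
            rw [Finset.prod_eq_prod_Ico_succ_bot (by omega : k < n),
              Finset.prod_Ico_succ_top (by omega : k + 1 ≤ n)]
            ring
          rw [this, show n + 1 - 1 - k = n - k from by omega]
        rw [← Finset.sum_congr rfl hmid, hbot, htop, Finset.sum_add_distrib]
        ring
      · -- base case : i = n
        have : i = n := by omega
        subst this
        rw [Finset.Ico_self, Finset.prod_empty,
          show Finset.Ico i (i+1) = {i} by rw [Finset.Ico_add_one_right_eq_Icc, Finset.Icc_self]]
        simp
end Newton

section Main
variable {R : Type*} [CommRing R]
open PowerSeries

noncomputable def FJT_GG {n : ℕ} (x : Fin n → Rˣ) (l : ℕ) : PowerSeries R :=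
  if h : l < n then geom ((x ⟨l, h⟩ : Rˣ) : R) * geom (((x ⟨l, h⟩)⁻¹ : Rˣ) : R) else 1

def FJT_pp {n : ℕ} (x : Fin n → Rˣ) (l : ℕ) : R :=
  if h : l < n then ((x ⟨l, h⟩ : Rˣ) : R) + (((x ⟨l, h⟩)⁻¹ : Rˣ) : R) else 0

noncomputable def FJT_PP {n : ℕ} (x : Fin n → Rˣ) (k : ℕ) : PowerSeries R :=
  ∏ l ∈ Finset.Ico k n, FJT_GG x l

noncomputable def FJT_T {n : ℕ} (x : Fin n → Rˣ) (k : ℕ) : PowerSeries R :=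
  (1 - PowerSeries.X ^ 2) * (PowerSeries.X ^ (n - 1 - k) * FJT_PP x k)

def FJT_cc {n : ℕ} (x : Fin n → Rˣ) (i k : ℕ) : R :=
  ∏ l ∈ Finset.Ico (k+1) n, (FJT_pp x i - FJT_pp x l)

noncomputable def FJT_L {R : Type*} [CommRing R] (a : ℕ → R) (m : ℕ) : PowerSeries R :=
  ∏ j ∈ Finset.range m, lin (a (j + 1))

lemma FJT_uG {n : ℕ} (x : Fin n → Rˣ) {l : ℕ} (h : l < n) :
    FJT_useries (FJT_pp x l) * FJT_GG x l = 1 := by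
  rw [FJT_pp, FJT_GG, dif_pos h, dif_pos h]
  exact FJT_useries_mul_geom (Units.mul_inv _)

lemma FJT_GG_exp {n : ℕ} (x : Fin n → Rˣ) {i : ℕ} (hi : i < n) :
    FJT_GG x i = ∑ k ∈ Finset.Ico i n,
      C (FJT_cc x i k) * (X ^ (n - 1 - k) * FJT_PP x k) := by
  have hL : (∏ l ∈ Finset.Ico (i+1) n, FJT_useries (FJT_pp x l)) * FJT_PP x i = FJT_GG x i := by
    rw [FJT_PP, Finset.prod_eq_prod_Ico_succ_bot hi]
    calc (∏ l ∈ Finset.Ico (i+1) n, FJT_useries (FJT_pp x l)) *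
          (FJT_GG x i * ∏ l ∈ Finset.Ico (i+1) n, FJT_GG x l)
        = FJT_GG x i * ∏ l ∈ Finset.Ico (i+1) n,
            (FJT_useries (FJT_pp x l) * FJT_GG x l) := by
          rw [Finset.prod_mul_distrib]; ring
      _ = FJT_GG x i := by
          rw [Finset.prod_congr rfl fun l hl => FJT_uG x (Finset.mem_Ico.mp hl).2]
          simp
  have hR : ∀ k ∈ Finset.Ico i n,
      (C (FJT_cc x i k) * (X ^ (n - 1 - k) * ∏ l ∈ Finset.Ico i k, FJT_useries (FJT_pp x l)))
        * FJT_PP x i =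
      C (FJT_cc x i k) * (X ^ (n - 1 - k) * FJT_PP x k) := by
    intro k hk
    rw [Finset.mem_Ico] at hk
    rw [FJT_PP, ← Finset.prod_Ico_consecutive _ hk.1 (le_of_lt hk.2)]
    calc (C (FJT_cc x i k) * (X ^ (n-1-k) * ∏ l ∈ Finset.Ico i k, FJT_useries (FJT_pp x l)))
          * ((∏ l ∈ Finset.Ico i k, FJT_GG x l) * ∏ l ∈ Finset.Ico k n, FJT_GG x l)
        = (C (FJT_cc x i k) * (X ^ (n-1-k) * ∏ l ∈ Finset.Ico k n, FJT_GG x l)) *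
            ∏ l ∈ Finset.Ico i k, (FJT_useries (FJT_pp x l) * FJT_GG x l) := by
          rw [Finset.prod_mul_distrib]; ring
      _ = C (FJT_cc x i k) * (X ^ (n-1-k) * ∏ l ∈ Finset.Ico k n, FJT_GG x l) := by
          rw [Finset.prod_congr rfl fun l hl => FJT_uG x ((Finset.mem_Ico.mp hl).2.trans hk.2)]
          simp
  calc FJT_GG x i
      = (∏ l ∈ Finset.Ico (i+1) n, FJT_useries (FJT_pp x l)) * FJT_PP x i := hL.symm
    _ = (∑ k ∈ Finset.Ico i n, C (∏ l ∈ Finset.Ico (k+1) n, (FJT_pp x i - FJT_pp x l)) *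
          (X ^ (n - 1 - k) * ∏ l ∈ Finset.Ico i k, FJT_useries (FJT_pp x l))) * FJT_PP x i := by
        rw [FJT_newton (FJT_pp x) n i hi]
    _ = ∑ k ∈ Finset.Ico i n, (C (FJT_cc x i k) *
          (X ^ (n - 1 - k) * ∏ l ∈ Finset.Ico i k, FJT_useries (FJT_pp x l))) * FJT_PP x i := by
        rw [Finset.sum_mul]; rfl
    _ = ∑ k ∈ Finset.Ico i n, C (FJT_cc x i k) * (X ^ (n - 1 - k) * FJT_PP x k) :=
        Finset.sum_congr rfl hR

lemma FJT_stepA {n : ℕ} (x : Fin n → Rˣ) (i : Fin n) :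
    geom ((x i : Rˣ) : R) + geom (((x i)⁻¹ : Rˣ) : R) =
      1 + ∑ k ∈ Finset.Ico (i : ℕ) n, C (FJT_cc x (i : ℕ) k) * FJT_T x k := by
  rw [FJT_geom_add_geom (Units.mul_inv (x i))]
  have hGG : FJT_GG x (i : ℕ) = geom ((x i : Rˣ) : R) * geom (((x i)⁻¹ : Rˣ) : R) := by
    rw [FJT_GG, dif_pos i.isLt]
  rw [← hGG, FJT_GG_exp x i.isLt, Finset.mul_sum]
  congr 1
  refine Finset.sum_congr rfl fun k _ => ?_
  rw [FJT_T]
  ring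

lemma FJT_M_entry {n : ℕ} (x : Fin n → Rˣ) (a : ℕ → R) (i : Fin n) (m : ℕ) :
    facpow ((x i : Rˣ) : R) a m + facpow (((x i)⁻¹ : Rˣ) : R) a m =
      coeff m (FJT_L a m) +
        ∑ k ∈ Finset.Ico (i : ℕ) n, FJT_cc x (i : ℕ) k * coeff m (FJT_T x k * FJT_L a m) := by
  have h1 : facpow ((x i : Rˣ) : R) a m + facpow (((x i)⁻¹ : Rˣ) : R) a m =
      coeff m ((geom ((x i : Rˣ) : R) + geom (((x i)⁻¹ : Rˣ) : R)) * FJT_L a m) := by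
    rw [add_mul, map_add, FJT_L, FJT_coeff_geom_mul_linprod, FJT_coeff_geom_mul_linprod]
    rfl
  rw [h1, FJT_stepA, add_mul, one_mul, map_add, Finset.sum_mul, map_sum]
  congr 1
  refine Finset.sum_congr rfl fun k _ => ?_
  rw [mul_assoc, coeff_C_mul]

end Main



section HeoEntry
variable {R : Type*} [CommRing R]
open PowerSeries

lemma FJT_constCoeff_T {n : ℕ} (x : Fin n → Rˣ) (k : ℕ) :
    constantCoeff (FJT_PP x k) = 1 := by
  rw [FJT_PP, map_prod]
  refine Finset.prod_eq_one fun l _ => ?_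
  rw [FJT_GG]
  split
  · rw [map_mul]
    have : ∀ y : R, constantCoeff (geom y) = 1 := fun y => by
      simp [geom, ← coeff_zero_eq_constantCoeff]
    rw [this, this, mul_one]
  · simp

lemma FJT_heo_entry {n : ℕ} (hn : 1 ≤ n) (x : Fin n → Rˣ) (a : ℕ → R) (c : ℕ) {d : ℕ}
    (hd : d < n) (k : Fin n) :
    heo (fun k' : Fin (n - (k : ℕ)) =>
        x ⟨(k : ℕ) + (k' : ℕ), by have := k.2; have := k'.2; omega⟩) a
        ((c : ℤ) - (d : ℕ) + ((k : ℕ) : ℕ)) =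
      coeff (c + (n - 1 - d)) (FJT_T x (k : ℕ) * FJT_L a (c + (n - 1 - d))) +
      (if (k : ℕ) = n - 1 then
        coeff (c + (n - 1 - d)) (FJT_L a (c + (n - 1 - d))) -
          (if c + (n - 1 - d) = 0 then (1 : R) else 0) else 0) := by
  have hkn := k.isLt
  have hprod : (∏ i' : Fin (n - (k : ℕ)),
      (geom ((x ⟨(k : ℕ) + (i' : ℕ), by have := k.2; have := i'.2; omega⟩ : Rˣ) : R) *
        geom (((x ⟨(k : ℕ) + (i' : ℕ), by have := k.2; have := i'.2; omega⟩)⁻¹ : Rˣ) : R))) =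
      FJT_PP x (k : ℕ) := by
    have h1 : ∀ i' : Fin (n - (k : ℕ)),
        (geom ((x ⟨(k : ℕ) + (i' : ℕ), by have := k.2; have := i'.2; omega⟩ : Rˣ) : R) *
          geom (((x ⟨(k : ℕ) + (i' : ℕ), by have := k.2; have := i'.2; omega⟩)⁻¹ : Rˣ) : R)) =
        FJT_GG x ((k : ℕ) + (i' : ℕ)) := by
      intro i'
      rw [FJT_GG, dif_pos (by have := k.2; have := i'.2; omega : (k : ℕ) + (i' : ℕ) < n)]
    rw [Finset.prod_congr rfl (fun i' _ => h1 i')]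
    rw [Fin.prod_univ_eq_prod_range (fun l => FJT_GG x ((k : ℕ) + l)) (n - (k : ℕ))]
    rw [FJT_PP, Finset.prod_Ico_eq_prod_range]
  rcases Nat.lt_or_ge (k : ℕ) (n - 1) with hk | hk
  · -- k < n - 1
    rw [if_neg (by omega : ¬ (k : ℕ) = n - 1), add_zero]
    rcases le_or_gt 0 ((c : ℤ) - (d : ℕ) + ((k : ℕ) : ℕ)) with hm | hm
    · -- 0 ≤ m
      unfold heo
      rw [if_pos hm, dif_neg (by omega : ¬ n - (k : ℕ) = 1)]
      have htn : ((c : ℤ) - (d : ℕ) + ((k : ℕ) : ℕ)).toNat = c + (k : ℕ) - d := by omega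
      have hlen : n - (k : ℕ) + ((c : ℤ) - (d : ℕ) + ((k : ℕ) : ℕ)).toNat - 1
          = c + (n - 1 - d) := by omega
      rw [hlen, htn]
      have hT : FJT_T x (k : ℕ) * FJT_L a (c + (n - 1 - d)) =
          X ^ (n - 1 - (k : ℕ)) *
            ((1 - X ^ 2) * FJT_PP x (k : ℕ) * FJT_L a (c + (n - 1 - d))) := by
        rw [FJT_T]; ring
      rw [hT, coeff_X_pow_mul', if_pos (by omega : n - 1 - (k : ℕ) ≤ c + (n - 1 - d)),
        show c + (n - 1 - d) - (n - 1 - (k : ℕ)) = c + (k : ℕ) - d from by omega]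
      rw [show ((1 : PowerSeries R) - X ^ 2) *
          (∏ i' : Fin (n - (k : ℕ)),
            (geom ((x ⟨(k : ℕ) + (i' : ℕ), by have := k.2; have := i'.2; omega⟩ : Rˣ) : R) *
              geom (((x ⟨(k : ℕ) + (i' : ℕ), by have := k.2; have := i'.2; omega⟩)⁻¹ : Rˣ) : R))) *
          (∏ j ∈ Finset.range (c + (n - 1 - d)), lin (a (j + 1)))
          = (1 - X ^ 2) * FJT_PP x (k : ℕ) * FJT_L a (c + (n - 1 - d)) from by
        rw [hprod]; rfl]
    · -- m < 0
      unfold heo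
      rw [if_neg (by omega : ¬ (0 : ℤ) ≤ (c : ℤ) - (d : ℕ) + ((k : ℕ) : ℕ))]
      have hT : FJT_T x (k : ℕ) * FJT_L a (c + (n - 1 - d)) =
          X ^ (n - 1 - (k : ℕ)) *
            ((1 - X ^ 2) * FJT_PP x (k : ℕ) * FJT_L a (c + (n - 1 - d))) := by
        rw [FJT_T]; ring
      rw [hT, coeff_X_pow_mul', if_neg (by omega : ¬ n - 1 - (k : ℕ) ≤ c + (n - 1 - d))]
  · -- k = n - 1
    have hk' : (k : ℕ) = n - 1 := by omega
    have hm : (0 : ℤ) ≤ (c : ℤ) - (d : ℕ) + ((k : ℕ) : ℕ) := by omega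
    unfold heo
    rw [if_pos hm, dif_pos (by omega : n - (k : ℕ) = 1)]
    have htn : ((c : ℤ) - (d : ℕ) + ((k : ℕ) : ℕ)).toNat = c + (n - 1 - d) := by omega
    rw [htn]
    have hx0 : (⟨(k : ℕ) + ((⟨0, by omega⟩ : Fin (n - (k : ℕ))) : ℕ), by omega⟩ : Fin n) = k := by
      ext; simp
    have hgg : geom ((x k : Rˣ) : R) + geom (((x k)⁻¹ : Rˣ) : R) =
        1 + FJT_T x (k : ℕ) := by
      rw [FJT_geom_add_geom (Units.mul_inv (x k)), FJT_T, hk']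
      have h0 : n - 1 - (n - 1) = 0 := by omega
      have hsing : Finset.Ico (n - 1) n = {n - 1} := by
        ext l; simp only [Finset.mem_Ico, Finset.mem_singleton]; omega
      rw [h0, pow_zero, one_mul, FJT_PP, hsing, Finset.prod_singleton, FJT_GG,
        dif_pos (by omega : n - 1 < n)]
      have : (⟨n - 1, by omega⟩ : Fin n) = k := by ext; simp [hk']
      rw [this]
    beta_reduce
    rw [hx0, hgg, add_mul, one_mul, map_add, if_pos hk']
    have hLrfl : (∏ j ∈ Finset.range (c + (n - 1 - d)), lin (a (j + 1)))
        = FJT_L a (c + (n - 1 - d)) := rfl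
    rw [hLrfl]
    have hif : (if (c : ℤ) - (d : ℕ) + ((k : ℕ) : ℕ) = 0 then (1 : R) else 0)
        = (if c + (n - 1 - d) = 0 then (1 : R) else 0) := by
      congr 1
      simp only [eq_iff_iff]
      omega
    rw [hif]
    ring

end HeoEntry

/-- flagged Jacobi-Trudi identity, even orthogonal case. -/
theorem flagged_jacobi_trudi_eo {R : Type*} [CommRing R] (n : ℕ) (hn : 1 ≤ n)
    (x : Fin n → Rˣ) (a : ℕ → R) (lam : Fin n → ℕ) (hlam : Antitone lam) :
    Matrix.det (Matrix.of fun i j : Fin n =>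
        facpow ((x i : R)) a (lam j + (n - 1 - (j : ℕ)))
          + facpow ((((x i)⁻¹ : Rˣ) : R)) a (lam j + (n - 1 - (j : ℕ)))) =
      (if lam ⟨n - 1, by omega⟩ = 0 then (2 : R) else 1) *
      (∏ i : Fin n, ∏ j ∈ Finset.Ioi i,
          ((x i : R) + (((x i)⁻¹ : Rˣ) : R) - (x j : R) - (((x j)⁻¹ : Rˣ) : R))) *
        Matrix.det (Matrix.of fun i j : Fin n =>
          heo (fun k : Fin (n - (i : ℕ)) =>
              x ⟨(i : ℕ) + (k : ℕ), by have := i.isLt; have := k.isLt; omega⟩) a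
            ((lam j : ℤ) - (j : ℕ) + (i : ℕ))) := by
  classical
  have hlast : n - 1 < n := by omega
  set HG : Matrix (Fin n) (Fin n) R := Matrix.of fun i j : Fin n =>
      heo (fun k : Fin (n - (i : ℕ)) =>
          x ⟨(i : ℕ) + (k : ℕ), by have := i.isLt; have := k.isLt; omega⟩) a
        ((lam j : ℤ) - (j : ℕ) + (i : ℕ)) with hHG
  set Ct : Matrix (Fin n) (Fin n) R := Matrix.of fun i k : Fin n =>
      if (i : ℕ) ≤ (k : ℕ) then FJT_cc x (i : ℕ) (k : ℕ) else 0 with hCt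
  set Hp : Matrix (Fin n) (Fin n) R := Matrix.of fun k j : Fin n =>
      PowerSeries.coeff (lam j + (n - 1 - (j : ℕ)))
          (FJT_T x (k : ℕ) * FJT_L a (lam j + (n - 1 - (j : ℕ)))) +
        (if (k : ℕ) = n - 1 then
          PowerSeries.coeff (lam j + (n - 1 - (j : ℕ)))
            (FJT_L a (lam j + (n - 1 - (j : ℕ)))) else 0) with hHp
  have hfact : (Matrix.of fun i j : Fin n =>
      facpow ((x i : R)) a (lam j + (n - 1 - (j : ℕ)))
        + facpow ((((x i)⁻¹ : Rˣ) : R)) a (lam j + (n - 1 - (j : ℕ)))) = Ct * Hp := by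
    ext i j
    rw [Matrix.mul_apply, Matrix.of_apply]
    rw [FJT_M_entry x a i (lam j + (n - 1 - (j : ℕ)))]
    have hterm : ∀ k : Fin n, Ct i k * Hp k j =
        (if (i : ℕ) ≤ (k : ℕ) then
          FJT_cc x (i : ℕ) (k : ℕ) *
            PowerSeries.coeff (lam j + (n - 1 - (j : ℕ)))
              (FJT_T x (k : ℕ) * FJT_L a (lam j + (n - 1 - (j : ℕ)))) else 0) +
        (if (k : ℕ) = n - 1 then
          (if (i : ℕ) ≤ (k : ℕ) then FJT_cc x (i : ℕ) (k : ℕ) else 0) *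
            PowerSeries.coeff (lam j + (n - 1 - (j : ℕ)))
              (FJT_L a (lam j + (n - 1 - (j : ℕ)))) else 0) := by
      intro k
      rw [hCt, hHp]
      simp only [Matrix.of_apply]
      split_ifs with h1 h2 <;> ring
    rw [Finset.sum_congr rfl (fun k _ => hterm k), Finset.sum_add_distrib]
    have hsum2 : (∑ k : Fin n, if (k : ℕ) = n - 1 then
        (if (i : ℕ) ≤ (k : ℕ) then FJT_cc x (i : ℕ) (k : ℕ) else 0) *
          PowerSeries.coeff (lam j + (n - 1 - (j : ℕ)))
            (FJT_L a (lam j + (n - 1 - (j : ℕ)))) else 0) =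
        PowerSeries.coeff (lam j + (n - 1 - (j : ℕ)))
          (FJT_L a (lam j + (n - 1 - (j : ℕ)))) := by
      rw [Finset.sum_eq_single_of_mem (⟨n - 1, hlast⟩ : Fin n) (Finset.mem_univ _)
        (fun b _ hb => if_neg (fun hval => hb (Fin.ext hval)))]
      rw [if_pos rfl, if_pos (show (i : ℕ) ≤ n - 1 by have := i.isLt; omega)]
      have hcc1 : FJT_cc x (i : ℕ) (n - 1) = 1 := by
        rw [FJT_cc, show Finset.Ico (n - 1 + 1) n = (∅ : Finset ℕ) from by
          ext l; simp only [Finset.mem_Ico, Finset.notMem_empty, iff_false]; omega]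
        exact Finset.prod_empty
      rw [hcc1, one_mul]
    have hsum1 : (∑ k : Fin n, if (i : ℕ) ≤ (k : ℕ) then
          FJT_cc x (i : ℕ) (k : ℕ) *
            PowerSeries.coeff (lam j + (n - 1 - (j : ℕ)))
              (FJT_T x (k : ℕ) * FJT_L a (lam j + (n - 1 - (j : ℕ)))) else 0) =
        ∑ l ∈ Finset.Ico (i : ℕ) n,
          FJT_cc x (i : ℕ) l *
            PowerSeries.coeff (lam j + (n - 1 - (j : ℕ)))
              (FJT_T x l * FJT_L a (lam j + (n - 1 - (j : ℕ)))) := by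
      rw [Fin.sum_univ_eq_sum_range (fun l => if (i : ℕ) ≤ l then
          FJT_cc x (i : ℕ) l *
            PowerSeries.coeff (lam j + (n - 1 - (j : ℕ)))
              (FJT_T x l * FJT_L a (lam j + (n - 1 - (j : ℕ)))) else 0) n]
      rw [Finset.range_eq_Ico,
        ← Finset.sum_subset (Finset.Ico_subset_Ico (Nat.zero_le _) le_rfl)
          (fun l _ hl => if_neg (fun hle => hl (Finset.mem_Ico.mpr
            ⟨hle, by have := Finset.mem_Ico.mp ‹l ∈ Finset.Ico 0 n›; omega⟩)))]
      refine Finset.sum_congr rfl fun l hl => ?_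
      rw [if_pos (Finset.mem_Ico.mp hl).1]
    rw [hsum1, hsum2]
    ring
  rw [hfact, Matrix.det_mul]
  have hCtTri : Ct.BlockTriangular id := by
    intro p q hpq
    rw [hCt]
    simp only [Matrix.of_apply]
    rw [if_neg]
    have : (q : ℕ) < (p : ℕ) := hpq
    omega
  have hdetCt : Ct.det = ∏ i : Fin n, ∏ j ∈ Finset.Ioi i,
      ((x i : R) + (((x i)⁻¹ : Rˣ) : R) - (x j : R) - (((x j)⁻¹ : Rˣ) : R)) := by
    rw [Matrix.det_of_upperTriangular hCtTri]
    refine Finset.prod_congr rfl fun i _ => ?_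
    rw [hCt]
    simp only [Matrix.of_apply, le_refl, if_pos]
    rw [FJT_cc]
    have hset : Finset.Ico ((i : ℕ) + 1) n = Finset.Ioo (i : ℕ) n := by
      ext l
      simp only [Finset.mem_Ico, Finset.mem_Ioo]
      omega
    rw [hset, ← Fin.map_valEmbedding_Ioi, Finset.prod_map]
    refine Finset.prod_congr rfl fun j _ => ?_
    rw [Fin.valEmbedding_apply, FJT_pp, FJT_pp, dif_pos i.isLt, dif_pos j.isLt]
    simp only [Fin.eta]
    ring
  rw [hdetCt]
  -- entries of HG
  have hHGe : ∀ p q : Fin n, HG p q =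
      PowerSeries.coeff (lam q + (n - 1 - (q : ℕ)))
          (FJT_T x (p : ℕ) * FJT_L a (lam q + (n - 1 - (q : ℕ)))) +
        (if (p : ℕ) = n - 1 then
          PowerSeries.coeff (lam q + (n - 1 - (q : ℕ)))
            (FJT_L a (lam q + (n - 1 - (q : ℕ)))) -
            (if lam q + (n - 1 - (q : ℕ)) = 0 then (1 : R) else 0) else 0) :=
    fun p q => FJT_heo_entry hn x a (lam q) q.isLt p
  have hHpHG : ∀ p q : Fin n, Hp p q = HG p q +
      (if (p : ℕ) = n - 1 ∧ lam q + (n - 1 - (q : ℕ)) = 0 then (1 : R) else 0) := by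
    intro p q
    rw [hHp]
    simp only [Matrix.of_apply]
    rw [hHGe p q]
    by_cases h1 : (p : ℕ) = n - 1 <;> by_cases h2 : lam q + (n - 1 - (q : ℕ)) = 0 <;>
      simp [h1, h2] <;> ring
  split_ifs with hc
  · -- lam (n-1) = 0 : factor 2
    have hc' : lam (⟨n - 1, hlast⟩ : Fin n) = 0 := hc
    set u : Fin n → R := fun p => if p = (⟨n - 1, hlast⟩ : Fin n) then (1 : R) else 0 with hu
    have hL0 : FJT_L a (lam (⟨n - 1, hlast⟩ : Fin n) +
        (n - 1 - ((⟨n - 1, hlast⟩ : Fin n) : ℕ))) = 1 := by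
      show FJT_L a (lam (⟨n - 1, hlast⟩ : Fin n) + (n - 1 - (n - 1))) = 1
      rw [hc']
      simp [FJT_L]
    have hidx : lam (⟨n - 1, hlast⟩ : Fin n) + (n - 1 - ((⟨n - 1, hlast⟩ : Fin n) : ℕ)) = 0 := by
      show lam (⟨n - 1, hlast⟩ : Fin n) + (n - 1 - (n - 1)) = 0
      rw [hc']
      omega
    have hcol : ∀ p : Fin n, HG p (⟨n - 1, hlast⟩ : Fin n) = u p := by
      intro p
      rw [hHGe p ⟨n - 1, hlast⟩, hL0, hidx, hu]
      simp only [map_one, if_pos rfl]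
      by_cases hp : (p : ℕ) = n - 1
      · have hpe : p = (⟨n - 1, hlast⟩ : Fin n) := Fin.ext hp
        rw [if_pos hp, if_pos hpe]
        have hT0 : PowerSeries.coeff 0 (FJT_T x (p : ℕ) * 1) = 1 := by
          rw [mul_one, FJT_T, hp, PowerSeries.coeff_zero_eq_constantCoeff, map_mul, map_mul,
            show n - 1 - (n - 1) = 0 from by omega, pow_zero, map_one, FJT_constCoeff_T]
          simp
        rw [hT0]
        norm_num
      · have hpe : ¬ p = (⟨n - 1, hlast⟩ : Fin n) := fun h => hp (by rw [h])
        rw [if_neg hp, if_neg hpe, add_zero]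
        rw [mul_one, FJT_T]
        have : ((1 : PowerSeries R) - PowerSeries.X ^ 2) *
            (PowerSeries.X ^ (n - 1 - (p : ℕ)) * FJT_PP x (p : ℕ)) =
            PowerSeries.X ^ (n - 1 - (p : ℕ)) *
              ((1 - PowerSeries.X ^ 2) * FJT_PP x (p : ℕ)) := by ring
        rw [this, PowerSeries.coeff_X_pow_mul', if_neg (by have := p.isLt; omega)]
    have hcolHp : ∀ p : Fin n, Hp p (⟨n - 1, hlast⟩ : Fin n) = 2 * u p := by
      intro p
      rw [hHpHG p ⟨n - 1, hlast⟩, hcol p, hu]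
      beta_reduce
      by_cases hp : (p : ℕ) = n - 1
      · have hpe : p = (⟨n - 1, hlast⟩ : Fin n) := Fin.ext hp
        rw [if_pos (⟨hp, hidx⟩ : _ ∧ _), if_pos hpe]
        norm_num
      · have hpe : ¬ p = (⟨n - 1, hlast⟩ : Fin n) := fun h => hp (by rw [h])
        simp [hpe, hp]
    have e1 : HG.updateCol (⟨n - 1, hlast⟩ : Fin n) u = HG := by
      ext p q
      rw [Matrix.updateCol_apply]
      split_ifs with hq
      · rw [hq, hcol p]
      · rfl
    have e2 : Hp = HG.updateCol (⟨n - 1, hlast⟩ : Fin n) ((2 : R) • u) := by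
      ext p q
      rw [Matrix.updateCol_apply]
      split_ifs with hq
      · rw [hq, hcolHp p]
        simp [hu]
      · rw [hHpHG p q, if_neg, add_zero]
        rintro ⟨h1, h2⟩
        exact hq (Fin.ext (by omega))
    rw [e2, Matrix.det_updateCol_smul, e1]
    ring
  · -- lam (n-1) ≠ 0
    have hHpHG' : Hp = HG := by
      ext p q
      rw [hHpHG p q, if_neg, add_zero]
      rintro ⟨h1, h2⟩
      have hq : (q : ℕ) = n - 1 := by have := q.isLt; omega
      have hqe : (⟨n - 1, hlast⟩ : Fin n) = q := Fin.ext (by simp [hq])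
      have : lam (⟨n - 1, hlast⟩ : Fin n) = 0 := by rw [hqe]; omega
      exact hc this
    rw [hHpHG']
    ring
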